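/- Let L be positive definite self-adjoint on a finite-dimensional real inner product space H and τ > 0. With R₋ = [[I, -(τ/2)I], [(τ/2)L, I]] on H × H, the operator norm of R₋⁻¹ with respect to the energy norm ‖(u,v)‖_E² = ⟨Lu,u⟩ + ‖v‖² is at most 1. -/
import Mathlib


open RealInnerProductSpace ContinuousLinearMap

theorem stmt_4 {H : Type*} [NormedAddCommGroup H] [InnerProductSpace ℝ H]
    [FiniteDimensional ℝ H]
    (L : H →L[ℝ] H) (hsa : IsSelfAdjoint L)
    (hposdef : ∀ x : H, x ≠ 0 → 0 < ⟪L x, x⟫)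
    (τ : ℝ) (hτ : 0 < τ)
    (Rm : (H × H) →L[ℝ] (H × H))
    (hRm : Rm = (ContinuousLinearMap.fst ℝ H H - (τ / 2) • ContinuousLinearMap.snd ℝ H H).prod
        ((τ / 2) • (L.comp (ContinuousLinearMap.fst ℝ H H)) + ContinuousLinearMap.snd ℝ H H))
    (S : (H × H) →L[ℝ] (H × H)) (hS : Rm * S = 1) (hS' : S * Rm = 1)
    (En : H × H → ℝ) (hEn : ∀ w : H × H, En w = ⟪L w.1, w.1⟫ + ‖w.2‖ ^ 2) :
    ∀ w : H × H, En (S w) ≤ En w := by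
  have hpos : ∀ x : H, 0 ≤ ⟪L x, x⟫ := by
    intro x
    rcases eq_or_ne x 0 with h | h
    · simp [h]
    · exact (hposdef x h).le
  have hsym := (ContinuousLinearMap.isSelfAdjoint_iff_isSymmetric.mp hsa)
  have key : ∀ z : H × H, En z ≤ En (Rm z) := by
    rintro ⟨a, b⟩
    have hRma : Rm (a, b) = (a - (τ/2) • b, (τ/2) • L a + b) := by
      simp [hRm]
    rw [hRma, hEn, hEn]
    simp only
    have hL : L (a - (τ/2) • b) = L a - (τ/2) • L b := by
      rw [map_sub, map_smul]
    have hba : ⟪L b, a⟫ = ⟪L a, b⟫ := by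
      exact (hsym b a).trans (real_inner_comm _ _)
    have hnorm : ‖(τ/2) • L a + b‖ ^ 2
        = ‖(τ/2) • L a‖ ^ 2 + 2 * ⟪(τ/2) • L a, b⟫ + ‖b‖ ^ 2 := by
      rw [norm_add_sq_real]
    rw [hL, hnorm]
    rw [inner_sub_left, inner_sub_right, inner_sub_right, real_inner_smul_left,
      real_inner_smul_left, real_inner_smul_right, real_inner_smul_right, norm_smul, real_inner_smul_left, hba]
    have h1 : 0 ≤ ⟪L a, a⟫ := hpos a
    have h2 : 0 ≤ ⟪L b, b⟫ := hpos b
    have h3 : (0:ℝ) ≤ ‖L a‖ ^ 2 := by positivity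
    have h4 : ‖(τ/2 : ℝ)‖ = τ/2 := by
      rw [Real.norm_eq_abs, abs_of_pos (by linarith)]
    rw [h4]
    nlinarith [sq_nonneg (τ/2), mul_nonneg (sq_nonneg (τ/2)) h2,
      mul_nonneg (sq_nonneg (τ/2)) h3]
  intro w
  have h := key (S w)
  have hw : Rm (S w) = w := by
    rw [← ContinuousLinearMap.mul_apply, hS, ContinuousLinearMap.one_apply]
  rwa [hw] at h
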